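/- For every integer ℓ ≥ 1 and prime p, the k-th divisor function satisfies ∑_{n=1}^∞ d_ℓ(n) e^{−n/y} / n ≤ (log 3y)^ℓ for all y > 3, where d_ℓ is the ℓ-fold divisor function. -/

import Mathlib

open Real ArithmeticFunction

namespace Stmt9Aux

lemma exp_third : Real.exp (1/3) ≤ 3/2 := by
  have h1 : Real.exp (1/3) ^ 3 = Real.exp 1 := by
    rw [← Real.exp_nat_mul]; norm_num
  have h2 : Real.exp 1 < 2.7182818286 := Real.exp_one_lt_d9
  by_contra h
  push_neg at h
  have h3 : (3/2:ℝ)^3 < Real.exp (1/3) ^ 3 :=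
    pow_lt_pow_left₀ h (by norm_num) (by norm_num)
  rw [h1] at h3
  norm_num at h3
  linarith

lemma one_le_log_three : 1 ≤ Real.log 3 := by
  rw [Real.le_log_iff_exp_le (by norm_num)]
  nlinarith [Real.exp_one_lt_d9]

lemma key_ineq {y : ℝ} (hy : 3 < y) :
    Real.exp (1 / y) * (1 / y + Real.log y) ≤ Real.log (3 * y) := by
  have hy0 : (0:ℝ) < y := by linarith
  have ht0 : 0 < 1 / y := by positivity
  have ht3 : 1 / y ≤ 1 / 3 := by
    rw [div_le_div_iff₀ hy0 (by norm_num)]; linarith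
  set t := 1 / y with htdef
  have hE : Real.exp t ≤ 3/2 := le_trans (Real.exp_le_exp.mpr ht3) exp_third
  have hE1 : Real.exp t - t * Real.exp t ≤ 1 := by
    have hneg := Real.add_one_le_exp (-t)
    have hprod : (-t + 1) * Real.exp t ≤ Real.exp (-t) * Real.exp t :=
      mul_le_mul_of_nonneg_right hneg (Real.exp_pos t).le
    have hee : Real.exp (-t) * Real.exp t = 1 := by
      rw [← Real.exp_add]; norm_num
    nlinarith [hprod, hee]
  have hlogy : Real.log y / y ≤ Real.log 3 / 3 := by
    have he3 : Real.exp 1 ≤ (3:ℝ) := by nlinarith [Real.exp_one_lt_d9]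
    exact Real.log_div_self_antitoneOn he3 (by nlinarith [Real.exp_one_lt_d9] : Real.exp 1 ≤ y)
      (by linarith)
  have hL3 : 1 ≤ Real.log 3 := one_le_log_three
  have hLy : Real.log 3 ≤ Real.log y := Real.log_le_log (by norm_num) (le_of_lt hy)
  have hlog3y : Real.log (3 * y) = Real.log 3 + Real.log y :=
    Real.log_mul (by norm_num) (by positivity)
  have htly : t * Real.log y = Real.log y / y := by
    rw [htdef]; ring
  -- exp t * (t + log y) = exp t * t + log y + (exp t - 1) * log y
  have h1 : Real.exp t * t ≤ 1/2 := by nlinarith [Real.exp_pos t]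
  have h2 : (Real.exp t - 1) * Real.log y ≤ Real.log 3 / 2 := by
    have hlogy0 : 0 < Real.log y := by linarith
    have : Real.exp t - 1 ≤ t * Real.exp t := by linarith
    have h4 : (Real.exp t - 1) * Real.log y ≤ t * Real.exp t * Real.log y :=
      mul_le_mul_of_nonneg_right this (le_of_lt hlogy0)
    have h5 : t * Real.exp t * Real.log y = Real.exp t * (Real.log y / y) := by
      rw [← htly]; ring
    have h6 : Real.exp t * (Real.log y / y) ≤ (3/2) * (Real.log 3 / 3) := by
      have hlyy : 0 ≤ Real.log y / y := by positivity
      have := mul_le_mul hE hlogy hlyy (by norm_num)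
      linarith
    nlinarith
  nlinarith

lemma hasSum_A {y : ℝ} (hy : 3 < y) :
    HasSum (fun a : ℕ => Real.exp (-((a:ℝ)+1)/y) / ((a:ℝ)+1))
      (-Real.log (1 - Real.exp (-(1/y)))) := by
  have hy0 : (0:ℝ) < y := by linarith
  have habs : |Real.exp (-(1/y))| < 1 := by
    rw [abs_of_pos (Real.exp_pos _)]
    have : -(1/y) < 0 := by
      have : (0:ℝ) < 1/y := by positivity
      linarith
    calc Real.exp (-(1/y)) < Real.exp 0 := Real.exp_lt_exp.mpr this
      _ = 1 := Real.exp_zero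
  have h := hasSum_pow_div_log_of_abs_lt_one habs
  convert h using 2 with a
  rw [← Real.exp_nat_mul]
  push_cast
  ring_nf

lemma sumA_le {y : ℝ} (hy : 3 < y) :
    -Real.log (1 - Real.exp (-(1/y))) ≤ 1/y + Real.log y := by
  have hy0 : (0:ℝ) < y := by linarith
  set r := Real.exp (-(1/y)) with hr
  have hr0 : 0 < r := Real.exp_pos _
  have h1 : r / y ≤ 1 - r := by
    have hexp := Real.add_one_le_exp (1/y)
    have hprod : (1/y + 1) * r ≤ Real.exp (1/y) * r :=
      mul_le_mul_of_nonneg_right hexp hr0.le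
    have hee : Real.exp (1/y) * r = 1 := by
      rw [hr, ← Real.exp_add]; norm_num
    have : (1/y) * r = r / y := by ring
    nlinarith
  have h2 : 0 < r / y := by positivity
  have h3 := Real.log_le_log h2 h1
  have hlog : Real.log (r / y) = -(1/y) - Real.log y := by
    rw [Real.log_div hr0.ne' hy0.ne', hr, Real.log_exp]
  linarith

open ENNReal in
lemma tsum_antidiag (H : ℕ × ℕ → ℝ≥0∞) (h1 : ∀ b, H (0, b) = 0) (h2 : ∀ a, H (a, 0) = 0) :
    ∑' n : ℕ, (∑ p ∈ n.divisorsAntidiagonal, H p) = ∑' p : ℕ × ℕ, H p := by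
  rw [← ENNReal.tsum_fiberwise H (fun p => p.1 * p.2)]
  congr 1
  funext n
  rcases eq_or_ne n 0 with rfl | hn
  · rw [Nat.divisorsAntidiagonal_zero, Finset.sum_empty]
    symm
    rw [ENNReal.tsum_eq_zero]
    rintro ⟨⟨a, b⟩, hp⟩
    simp only [Set.mem_preimage, Set.mem_singleton_iff, Nat.mul_eq_zero] at hp
    rcases hp with rfl | rfl
    · exact h1 b
    · exact h2 a
  · rw [show (fun p : ℕ × ℕ => p.1 * p.2) ⁻¹' {n} = ↑n.divisorsAntidiagonal by
      ext p; simp [Nat.mem_divisorsAntidiagonal, hn],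
      Finset.tsum_subtype' n.divisorsAntidiagonal H]

open ENNReal in
lemma main_bound {y : ℝ} (hy : 3 < y) (l : ℕ) (hl : 1 ≤ l) :
    ∑' n : ℕ, ((ArithmeticFunction.zeta ^ l) n : ℝ≥0∞) *
        ENNReal.ofReal (Real.exp (-(n:ℝ)/y) / (n:ℝ))
      ≤ ENNReal.ofReal (Real.log (3*y)) ^ l := by
  have hy0 : (0:ℝ) < y := by linarith
  set F : ℕ → ℝ≥0∞ := fun n => ENNReal.ofReal (Real.exp (-(n:ℝ)/y) / (n:ℝ)) with hF
  set E : ℝ≥0∞ := ENNReal.ofReal (Real.exp (1/y)) with hE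
  set M : ℝ≥0∞ := ENNReal.ofReal (Real.log (3*y)) with hM
  have hF0 : F 0 = 0 := by simp [hF]
  -- F is submultiplicative up to E
  have hFmul : ∀ a b : ℕ, a ≠ 0 → b ≠ 0 → F (a*b) ≤ E * F a * F b := by
    intro a b ha hb
    have ha1 : (1:ℝ) ≤ (a:ℝ) := by exact_mod_cast Nat.one_le_iff_ne_zero.mpr ha
    have hb1 : (1:ℝ) ≤ (b:ℝ) := by exact_mod_cast Nat.one_le_iff_ne_zero.mpr hb
    have ha0 : (0:ℝ) < a := by linarith
    have hb0 : (0:ℝ) < b := by linarith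
    have hreal : Real.exp (-((a:ℝ)*(b:ℝ))/y) / ((a:ℝ)*(b:ℝ))
        ≤ Real.exp (1/y) * (Real.exp (-(a:ℝ)/y) / (a:ℝ) * (Real.exp (-(b:ℝ)/y) / (b:ℝ))) := by
      have e1 : Real.exp (1/y) * Real.exp (-(a:ℝ)/y) * Real.exp (-(b:ℝ)/y)
          = Real.exp ((1 - (a:ℝ) - (b:ℝ))/y) := by
        rw [← Real.exp_add, ← Real.exp_add]
        congr 1
        field_simp
        ring
      have hrhs : Real.exp (1/y) * (Real.exp (-(a:ℝ)/y) / (a:ℝ) * (Real.exp (-(b:ℝ)/y) / (b:ℝ)))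
          = Real.exp ((1 - (a:ℝ) - (b:ℝ))/y) / ((a:ℝ)*(b:ℝ)) := by
        rw [← e1]; ring
      rw [hrhs]
      have hexp : Real.exp (-((a:ℝ)*(b:ℝ))/y) ≤ Real.exp ((1 - (a:ℝ) - (b:ℝ))/y) := by
        apply Real.exp_le_exp.mpr
        exact (div_le_div_iff_of_pos_right hy0).mpr (by nlinarith)
      exact (div_le_div_iff_of_pos_right (by positivity)).mpr hexp
    calc F (a*b) = ENNReal.ofReal (Real.exp (-((a:ℝ)*(b:ℝ))/y) / ((a:ℝ)*(b:ℝ))) := by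
          rw [hF]; push_cast; ring_nf
      _ ≤ ENNReal.ofReal (Real.exp (1/y) * (Real.exp (-(a:ℝ)/y) / (a:ℝ) * (Real.exp (-(b:ℝ)/y) / (b:ℝ)))) :=
          ENNReal.ofReal_le_ofReal hreal
      _ = E * F a * F b := by
          rw [hE, hF, ENNReal.ofReal_mul (Real.exp_pos _).le,
            ENNReal.ofReal_mul (by positivity), mul_assoc]
  set A : ℝ≥0∞ := ∑' n, F n with hA
  have hAshift : A = ∑' n : ℕ, F (n+1) := by
    rw [hA, tsum_eq_zero_add' ENNReal.summable, hF0, zero_add]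
  have hAle : A ≤ ENNReal.ofReal (1/y + Real.log y) := by
    rw [hAshift]
    have hs := hasSum_A hy
    have heq : ∀ n : ℕ, F (n+1) = ENNReal.ofReal (Real.exp (-((n:ℝ)+1)/y) / ((n:ℝ)+1)) := by
      intro n; rw [hF]; push_cast; ring_nf
    calc (∑' n : ℕ, F (n+1))
        = ENNReal.ofReal (∑' n : ℕ, Real.exp (-((n:ℝ)+1)/y) / ((n:ℝ)+1)) := by
          rw [ENNReal.ofReal_tsum_of_nonneg (fun n => by positivity) hs.summable]
          exact tsum_congr heq
      _ ≤ ENNReal.ofReal (1/y + Real.log y) := by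
          apply ENNReal.ofReal_le_ofReal
          rw [hs.tsum_eq]
          exact sumA_le hy
  have hEA : E * A ≤ M := by
    calc E * A ≤ E * ENNReal.ofReal (1/y + Real.log y) := mul_le_mul_right hAle E
      _ = ENNReal.ofReal (Real.exp (1/y) * (1/y + Real.log y)) := by
          rw [hE, ENNReal.ofReal_mul (Real.exp_pos _).le]
      _ ≤ M := ENNReal.ofReal_le_ofReal (key_ineq hy)
  have hAM : A ≤ M := by
    have h1E : (1:ℝ≥0∞) ≤ E := by
      rw [hE, ENNReal.one_le_ofReal]
      exact Real.one_le_exp (by positivity)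
    calc A = 1 * A := (one_mul A).symm
      _ ≤ E * A := mul_le_mul_left h1E A
      _ ≤ M := hEA
  induction l, hl using Nat.le_induction with
  | base =>
    rw [pow_one, pow_one]
    refine le_trans (ENNReal.tsum_le_tsum fun n => ?_) hAM
    rcases eq_or_ne n 0 with rfl | hn
    · simp [hF0]
    · rw [ArithmeticFunction.zeta_apply_ne hn]
      simp
      exact le_rfl
  | succ l hl ih =>
    rw [pow_succ]
    calc ∑' n : ℕ, ((ArithmeticFunction.zeta ^ l * ArithmeticFunction.zeta) n : ℝ≥0∞) * F n
        ≤ ∑' n : ℕ, ∑ p ∈ n.divisorsAntidiagonal,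
            ((ArithmeticFunction.zeta ^ l) p.1 : ℝ≥0∞) * F p.1 * (E * F p.2) := by
          apply ENNReal.tsum_le_tsum
          intro n
          rw [ArithmeticFunction.mul_apply]
          push_cast
          rw [Finset.sum_mul]
          apply Finset.sum_le_sum
          intro p hp
          obtain ⟨hp1, hp2⟩ := Nat.ne_zero_of_mem_divisorsAntidiagonal hp
          obtain ⟨hpn, -⟩ := Nat.mem_divisorsAntidiagonal.mp hp
          rw [ArithmeticFunction.zeta_apply_ne hp2]
          push_cast
          rw [mul_one, ← hpn]
          calc ((ArithmeticFunction.zeta ^ l) p.1 : ℝ≥0∞) * F (p.1 * p.2)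
              ≤ ((ArithmeticFunction.zeta ^ l) p.1 : ℝ≥0∞) * (E * F p.1 * F p.2) :=
                mul_le_mul_right (hFmul p.1 p.2 hp1 hp2) _
            _ = ((ArithmeticFunction.zeta ^ l) p.1 : ℝ≥0∞) * F p.1 * (E * F p.2) := by ring
      _ = ∑' p : ℕ × ℕ, ((ArithmeticFunction.zeta ^ l) p.1 : ℝ≥0∞) * F p.1 * (E * F p.2) := by
          apply tsum_antidiag
          · intro b; simp
          · intro a; simp [hF0]
      _ = (∑' n : ℕ, ((ArithmeticFunction.zeta ^ l) n : ℝ≥0∞) * F n) * (E * A) := by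
          rw [ENNReal.tsum_prod']
          calc ∑' (a : ℕ) (b : ℕ), (((ArithmeticFunction.zeta ^ l) a : ℝ≥0∞) * F a * (E * F b))
              = ∑' (a : ℕ), (((ArithmeticFunction.zeta ^ l) a : ℝ≥0∞) * F a * (E * A)) := by
                refine tsum_congr fun a => ?_
                rw [ENNReal.tsum_mul_left, ENNReal.tsum_mul_left, ← hA]
            _ = (∑' (a : ℕ), ((ArithmeticFunction.zeta ^ l) a : ℝ≥0∞) * F a) * (E * A) :=
                ENNReal.tsum_mul_right
      _ ≤ M ^ l * M := mul_le_mul' ih hEA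

end Stmt9Aux

theorem stmt_9 (l : ℕ) (hl : 1 ≤ l) (y : ℝ) (hy : 3 < y) :
    ∑' n : ℕ, ((ArithmeticFunction.zeta ^ l) (n + 1) : ℝ) *
        Real.exp (-((n : ℝ) + 1) / y) / ((n : ℝ) + 1) ≤ (Real.log (3 * y)) ^ l := by
  have hy0 : (0:ℝ) < y := by linarith
  have hL0 : 0 ≤ Real.log (3 * y) := Real.log_nonneg (by nlinarith)
  set u : ℕ → ℝ := fun n => ((ArithmeticFunction.zeta ^ l) (n + 1) : ℝ) *
      Real.exp (-((n : ℝ) + 1) / y) / ((n : ℝ) + 1) with hu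
  have hupos : ∀ n, 0 ≤ u n := by
    intro n; rw [hu]; positivity
  have hT : ∑' n : ℕ, ENNReal.ofReal (u n) ≤ ENNReal.ofReal (Real.log (3*y)) ^ l := by
    set g : ℕ → ENNReal := fun n => ((ArithmeticFunction.zeta ^ l) n : ENNReal) *
        ENNReal.ofReal (Real.exp (-(n:ℝ)/y) / (n:ℝ)) with hg
    have hg0 : g 0 = 0 := by simp [hg]
    have hof : ∀ n : ℕ, ENNReal.ofReal (u n) = g (n+1) := by
      intro n
      simp only [hu, hg]
      rw [mul_div_assoc, ENNReal.ofReal_mul (by positivity), ENNReal.ofReal_natCast]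
      congr 2
      push_cast
      ring
    calc ∑' n : ℕ, ENNReal.ofReal (u n) = ∑' n : ℕ, g (n+1) := tsum_congr hof
      _ = ∑' n : ℕ, g n := by
          rw [tsum_eq_zero_add' (f := g) ENNReal.summable, hg0, zero_add]
      _ ≤ _ := Stmt9Aux.main_bound hy l hl
  have hne : ∑' n : ℕ, ENNReal.ofReal (u n) ≠ ⊤ :=
    (lt_of_le_of_lt hT (ENNReal.pow_lt_top ENNReal.ofReal_lt_top)).ne
  have hsumm : Summable u := by
    have h := ENNReal.summable_toReal hne
    have heq : (fun n => (ENNReal.ofReal (u n)).toReal) = u := by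
      funext n; exact ENNReal.toReal_ofReal (hupos n)
    rwa [heq] at h
  have hofsum : ENNReal.ofReal (∑' n, u n) = ∑' n, ENNReal.ofReal (u n) :=
    ENNReal.ofReal_tsum_of_nonneg hupos hsumm
  have hfinal : ENNReal.ofReal (∑' n, u n) ≤ ENNReal.ofReal ((Real.log (3*y)) ^ l) := by
    rw [hofsum, ENNReal.ofReal_pow hL0]
    exact hT
  exact (ENNReal.ofReal_le_ofReal_iff (by positivity)).mp hfinal
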